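/- Let G = (V, E) be a finite simple graph with m ≥ 1 edges, let i ≥ 2, and let nonnegative weights satisfy w_0 = 0, w_1 = 1 and w_{i−1} + w_{i+1} > 2·w_i. Let α be an integer with α ≥ m·(w_{i−1} + w_{i+1}) + 1 and α ≥ i + 2. Construct the hypergraph H whose vertex set is V together with new vertices s_1, …, s_α and t_1, …, t_α, and whose hyperedges are: all 2-element subsets of {s_1, …, s_α}, all 2-element subsets of {t_1, …, t_α}, and for each edge {x, y} ∈ E the two hyperedges {s_1, …, s_{i−1}, x, y, t_1, …, t_{i+1}} and {s_1, …, s_{i+1}, x, y, t_1, …, t_{i−1}}. Then the minimum, over all cuts S* with s_1 ∈ S* and t_1 ∉ S*, of the cardinality-based cost of S* equals m·(w_{i−1} + w_{i+1}) − (w_{i−1} + w_{i+1} − 2·w_i)·mc(G), where mc(G) is the maximum number of edges of G crossing a bipartition of V. -/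

import Mathlib

/-- The split value of a hyperedge `e` with respect to a cut `S`:
`min (|e ∩ S|, |e \ S|)`. -/
def splitVal {W : Type*} [DecidableEq W] (S e : Finset W) : ℕ :=
  min (e ∩ S).card (e \ S).card

/-- The vertex set of the constructed hypergraph: the original vertices `V`
together with `s`-vertices and `t`-vertices (indexed by naturals). -/
abbrev Vtx (V : Type*) := V ⊕ ℕ ⊕ ℕ

/-- The vertex `s_i`. -/
def sV {V : Type*} (i : ℕ) : Vtx V := Sum.inr (Sum.inl i)

/-- The vertex `t_i`. -/
def tV {V : Type*} (i : ℕ) : Vtx V := Sum.inr (Sum.inr i)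

/-- The set `{s_1, …, s_j}`. -/
def sSet (V : Type*) [DecidableEq V] (j : ℕ) : Finset (Vtx V) := (Finset.Icc 1 j).image sV

/-- The set `{t_1, …, t_j}`. -/
def tSet (V : Type*) [DecidableEq V] (j : ℕ) : Finset (Vtx V) := (Finset.Icc 1 j).image tV

/-- The two endpoints of a graph edge, as a `Finset`. -/
def pairFinset {V : Type*} [DecidableEq V] (e : Sym2 V) : Finset V :=
  Sym2.lift ⟨fun x y => ({x, y} : Finset V), fun _ _ => Finset.pair_comm _ _⟩ e

/-- The image `{x, y}` (inside `Vtx V`) of a graph edge `{x, y}`. -/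
def edgeImg {V : Type*} [DecidableEq V] (e : Sym2 V) : Finset (Vtx V) :=
  (pairFinset e).image Sum.inl

/-- The maximum cut value of `G`: the maximum over subsets `U` of the vertex set
of the number of edges with exactly one endpoint in `U`. -/
def maxCut {V : Type*} [Fintype V] [DecidableEq V] (G : SimpleGraph V)
    [DecidableRel G.Adj] : ℕ :=
  Finset.univ.sup fun U : Finset V =>
    (G.edgeFinset.filter (fun e => (pairFinset e ∩ U).card = 1)).card

/-- The hyperedge family built from `G`: the 2-element subsets of the two cliques,
and for each edge `{x,y}` of `G` the two hyperedges
`{s_1,…,s_{i-1},x,y,t_1,…,t_{i+1}}` and `{s_1,…,s_{i+1},x,y,t_1,…,t_{i-1}}`. -/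
def H4 {V : Type*} [Fintype V] [DecidableEq V] (G : SimpleGraph V) [DecidableRel G.Adj]
    (α i : ℕ) : Finset (Finset (Vtx V)) :=
  (sSet V α).powersetCard 2 ∪ (tSet V α).powersetCard 2 ∪
    G.edgeFinset.image (fun e => sSet V (i - 1) ∪ edgeImg e ∪ tSet V (i + 1)) ∪
    G.edgeFinset.image (fun e => sSet V (i + 1) ∪ edgeImg e ∪ tSet V (i - 1))

set_option linter.unusedSectionVars false

open Finset

section helpers
variable {V : Type*} [DecidableEq V]

lemma sV_inj : Function.Injective (sV (V := V)) := fun a b h => by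
  simpa [sV] using h

lemma tV_inj : Function.Injective (tV (V := V)) := fun a b h => by
  simpa [tV] using h

lemma mem_sSet {j k : ℕ} : sV k ∈ sSet V j ↔ 1 ≤ k ∧ k ≤ j := by
  simp only [sSet, mem_image, sV_inj.eq_iff, Finset.mem_Icc]
  aesop

lemma mem_tSet {j k : ℕ} : tV k ∈ tSet V j ↔ 1 ≤ k ∧ k ≤ j := by
  simp only [tSet, mem_image, tV_inj.eq_iff, Finset.mem_Icc]
  aesop

lemma card_sSet (j : ℕ) : (sSet V j).card = j := by
  rw [sSet, card_image_of_injective _ sV_inj, Nat.card_Icc]; omega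

lemma card_tSet (j : ℕ) : (tSet V j).card = j := by
  rw [tSet, card_image_of_injective _ tV_inj, Nat.card_Icc]; omega

lemma sSet_mono {j k : ℕ} (h : j ≤ k) : sSet V j ⊆ sSet V k := by
  apply image_subset_image; exact Icc_subset_Icc le_rfl h

lemma not_mem_tSet_sV {j k : ℕ} : sV k ∉ tSet V j := by
  simp [tSet, sV, tV]

lemma not_mem_sSet_tV {j k : ℕ} : tV k ∉ sSet V j := by
  simp [sSet, sV, tV]

lemma not_mem_sSet_inl {j : ℕ} {v : V} : Sum.inl v ∉ sSet V j := by
  simp [sSet, sV]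

lemma not_mem_tSet_inl {j : ℕ} {v : V} : Sum.inl v ∉ tSet V j := by
  simp [tSet, tV]

lemma not_mem_edgeImg_sV {e : Sym2 V} {k : ℕ} : sV k ∉ edgeImg e := by
  simp [edgeImg, sV]

lemma not_mem_edgeImg_tV {e : Sym2 V} {k : ℕ} : tV k ∉ edgeImg e := by
  simp [edgeImg, tV]

lemma pairFinset_mk (x y : V) : pairFinset s(x, y) = {x, y} := rfl

lemma card_pairFinset {e : Sym2 V} (he : ¬ e.IsDiag) : (pairFinset e).card = 2 := by
  induction e with
  | _ x y =>
    rw [pairFinset_mk, card_pair]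
    simpa using he

lemma pairFinset_injective : Function.Injective (pairFinset (V := V)) := by
  intro e e' h
  induction e with
  | _ x y =>
    induction e' with
    | _ x' y' =>
      rw [pairFinset_mk, pairFinset_mk] at h
      have h2 : ({x, y} : Set V) = {x', y'} := by
        rw [← Finset.coe_pair, ← Finset.coe_pair, h]
      rw [Set.pair_eq_pair_iff] at h2
      rcases h2 with ⟨rfl, rfl⟩ | ⟨rfl, rfl⟩
      · rfl
      · exact Sym2.eq_swap

lemma card_edgeImg {e : Sym2 V} (he : ¬ e.IsDiag) : (edgeImg e).card = 2 := by
  rw [edgeImg, card_image_of_injective _ Sum.inl_injective, card_pairFinset he]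

lemma edgeImg_injective : Function.Injective (edgeImg (V := V)) :=
  fun _ _ h => pairFinset_injective ((Finset.image_injective Sum.inl_injective) h)

/-- split value of a pair is at most 1 -/
lemma splitVal_pair_le {S p : Finset (Vtx V)} (hp : p.card = 2) : splitVal S p ≤ 1 := by
  have := Finset.card_sdiff_add_card_inter p S
  unfold splitVal; omega

/-- clique lower bound -/
lemma clique_lb (w : ℕ → ℝ) (hw0 : w 0 = 0) (hw1 : w 1 = 1) (hw : ∀ n, 0 ≤ w n)
    (S T : Finset (Vtx V)) :
    ((T ∩ S).card * (T \ S).card : ℝ) ≤ ∑ p ∈ T.powersetCard 2, w (splitVal S p) := by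
  classical
  set F := (T.powersetCard 2).filter (fun p => splitVal S p = 1) with hF
  have hcard : (T ∩ S).card * (T \ S).card ≤ F.card := by
    rw [← Finset.card_product]
    apply Finset.card_le_card_of_injOn (fun uv => {uv.1, uv.2})
    · rintro ⟨u, v⟩ huv
      simp only [Finset.mem_coe, Finset.mem_product, Finset.mem_inter, Finset.mem_sdiff] at huv ⊢
      obtain ⟨⟨huT, huS⟩, hvT, hvS⟩ := huv
      have hne : u ≠ v := fun h => hvS (h ▸ huS)
      rw [hF, Finset.mem_filter, Finset.mem_powersetCard]
      refine ⟨⟨?_, ?_⟩, ?_⟩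
      · intro x hx; rcases Finset.mem_insert.1 hx with rfl | hx
        · exact huT
        · rw [Finset.mem_singleton] at hx; exact hx ▸ hvT
      · exact Finset.card_pair hne
      · have h1 : ({u, v} : Finset (Vtx V)) ∩ S = {u} := by
          ext x; simp only [Finset.mem_inter, Finset.mem_insert, Finset.mem_singleton]
          constructor
          · rintro ⟨rfl | rfl, hxS⟩
            · rfl
            · exact absurd hxS hvS
          · rintro rfl; exact ⟨Or.inl rfl, huS⟩
        have h2 : ({u, v} : Finset (Vtx V)) \ S = {v} := by
          ext x; simp only [Finset.mem_sdiff, Finset.mem_insert, Finset.mem_singleton]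
          constructor
          · rintro ⟨rfl | rfl, hxS⟩
            · exact absurd huS hxS
            · rfl
          · rintro rfl; exact ⟨Or.inr rfl, hvS⟩
        simp [splitVal, h1, h2]
    · rintro ⟨u, v⟩ huv ⟨u', v'⟩ huv' h
      simp only [Finset.coe_product, Set.mem_prod, Finset.mem_coe, Finset.mem_inter,
        Finset.mem_sdiff] at huv huv'
      simp only at h
      have h2 : ({u, v} : Set (Vtx V)) = {u', v'} := by
        rw [← Finset.coe_pair, ← Finset.coe_pair, h]
      rw [Set.pair_eq_pair_iff] at h2
      rcases h2 with ⟨rfl, rfl⟩ | ⟨rfl, rfl⟩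
      · rfl
      · exact absurd huv'.2.2 (fun hc => hc huv.1.2)
  calc ((T ∩ S).card * (T \ S).card : ℝ) ≤ (F.card : ℝ) := by exact_mod_cast hcard
    _ = ∑ p ∈ F, w (splitVal S p) := by
        have : ∀ p ∈ F, w (splitVal S p) = 1 := fun p hp => by
          rw [(Finset.mem_filter.1 hp).2, hw1]
        rw [Finset.sum_congr rfl this, Finset.sum_const, nsmul_eq_mul, mul_one]
    _ ≤ ∑ p ∈ T.powersetCard 2, w (splitVal S p) := by
        apply Finset.sum_le_sum_of_subset_of_nonneg (Finset.filter_subset _ _)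
        intro p _ _; exact hw _

end helpers

section edgecomp
variable {V : Type*} [DecidableEq V]

lemma tSet_mono {j k : ℕ} (h : j ≤ k) : tSet V j ⊆ tSet V k := by
  apply Finset.image_subset_image; exact Finset.Icc_subset_Icc le_rfl h

lemma disj_sSet_edgeImg {j : ℕ} {e : Sym2 V} {S : Finset (Vtx V)} :
    Disjoint (sSet V j) (edgeImg e ∩ S) := by
  rw [Finset.disjoint_left]
  intro x hx hx'
  obtain ⟨k, -, rfl⟩ := Finset.mem_image.1 hx
  exact not_mem_edgeImg_sV (Finset.mem_of_mem_inter_left hx')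

lemma disj_tSet_edgeImg' {j : ℕ} {e : Sym2 V} {S : Finset (Vtx V)} :
    Disjoint (edgeImg e \ S) (tSet V j) := by
  rw [Finset.disjoint_right]
  intro x hx hx'
  obtain ⟨k, -, rfl⟩ := Finset.mem_image.1 hx
  exact not_mem_edgeImg_tV (Finset.mem_sdiff.1 hx').1

lemma inter_comp {α i : ℕ} {S : Finset (Vtx V)} (hi : 2 ≤ i) (hiα : i + 1 ≤ α)
    (hS : sSet V α ⊆ S) (hT : ∀ x ∈ tSet V α, x ∉ S) {e : Sym2 V} {j k : ℕ}
    (hj : j ≤ α) (hk : k ≤ α) :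
    ((sSet V j ∪ edgeImg e ∪ tSet V k) ∩ S).card = j + (edgeImg e ∩ S).card ∧
    ((sSet V j ∪ edgeImg e ∪ tSet V k) \ S).card = (edgeImg e \ S).card + k := by
  have hX : sSet V j ∩ S = sSet V j :=
    Finset.inter_eq_left.2 ((sSet_mono hj).trans hS)
  have hZ : tSet V k ∩ S = ∅ := by
    rw [Finset.eq_empty_iff_forall_notMem]
    intro x hx
    exact hT x (tSet_mono hk (Finset.mem_of_mem_inter_left hx))
      (Finset.mem_of_mem_inter_right hx)
  have hX' : sSet V j \ S = ∅ := by
    rw [Finset.sdiff_eq_empty_iff_subset]; exact (sSet_mono hj).trans hS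
  have hZ' : tSet V k \ S = tSet V k := by
    rw [Finset.sdiff_eq_self_iff_disjoint, Finset.disjoint_left]
    intro x hx hx'
    exact hT x (tSet_mono hk hx) hx'
  constructor
  · rw [Finset.union_inter_distrib_right, Finset.union_inter_distrib_right, hX, hZ,
      Finset.union_empty, Finset.card_union_of_disjoint disj_sSet_edgeImg, card_sSet]
  · rw [Finset.union_sdiff_distrib, Finset.union_sdiff_distrib, hX', hZ',
      Finset.empty_union, Finset.card_union_of_disjoint disj_tSet_edgeImg', card_tSet]

lemma splitA {α i : ℕ} {S : Finset (Vtx V)} (hi : 2 ≤ i) (hiα : i + 1 ≤ α)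
    (hS : sSet V α ⊆ S) (hT : ∀ x ∈ tSet V α, x ∉ S) {e : Sym2 V} (he : ¬ e.IsDiag) :
    splitVal S (sSet V (i-1) ∪ edgeImg e ∪ tSet V (i+1)) = (i-1) + (edgeImg e ∩ S).card := by
  obtain ⟨h1, h2⟩ := inter_comp (e := e) (j := i-1) (k := i+1) hi hiα hS hT
    (by omega) (by omega)
  have h3 : (edgeImg e \ S).card + (edgeImg e ∩ S).card = 2 :=
    (Finset.card_sdiff_add_card_inter _ _).trans (card_edgeImg he)
  unfold splitVal
  rw [h1, h2]
  omega

lemma splitB {α i : ℕ} {S : Finset (Vtx V)} (hi : 2 ≤ i) (hiα : i + 1 ≤ α)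
    (hS : sSet V α ⊆ S) (hT : ∀ x ∈ tSet V α, x ∉ S) {e : Sym2 V} (he : ¬ e.IsDiag) :
    splitVal S (sSet V (i+1) ∪ edgeImg e ∪ tSet V (i-1)) = (i+1) - (edgeImg e ∩ S).card := by
  obtain ⟨h1, h2⟩ := inter_comp (e := e) (j := i+1) (k := i-1) hi hiα hS hT
    (by omega) (by omega)
  have h3 : (edgeImg e \ S).card + (edgeImg e ∩ S).card = 2 :=
    (Finset.card_sdiff_add_card_inter _ _).trans (card_edgeImg he)
  unfold splitVal
  rw [h1, h2]
  omega

lemma filter_left_eq {j k : ℕ} {e : Sym2 V} :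
    (sSet V j ∪ edgeImg e ∪ tSet V k).filter (fun x => x.isLeft) = edgeImg e := by
  rw [Finset.filter_union, Finset.filter_union]
  have h1 : (sSet V j).filter (fun x => x.isLeft) = ∅ := by
    rw [Finset.filter_eq_empty_iff]
    intro x hx
    obtain ⟨l, -, rfl⟩ := Finset.mem_image.1 hx
    simp [sV]
  have h2 : (tSet V k).filter (fun x => x.isLeft) = ∅ := by
    rw [Finset.filter_eq_empty_iff]
    intro x hx
    obtain ⟨l, -, rfl⟩ := Finset.mem_image.1 hx
    simp [tV]
  have h3 : (edgeImg e).filter (fun x => x.isLeft) = edgeImg e := by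
    rw [Finset.filter_eq_self]
    intro x hx
    obtain ⟨l, -, rfl⟩ := Finset.mem_image.1 hx
    simp
  rw [h1, h2, h3, Finset.empty_union, Finset.union_empty]

end edgecomp

section decomp
variable {V : Type*} [Fintype V] [DecidableEq V]


lemma exists_mem_pairFinset (e : Sym2 V) : ∃ v, v ∈ pairFinset e := by
  induction e with
  | _ x y => exact ⟨x, by rw [pairFinset_mk]; simp⟩

lemma H4_sum (G : SimpleGraph V) [DecidableRel G.Adj] {α i : ℕ}
    (f : Finset (Vtx V) → ℝ) :
    ∑ x ∈ H4 G α i, f x =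
      (∑ p ∈ (sSet V α).powersetCard 2, f p) +
      (∑ p ∈ (tSet V α).powersetCard 2, f p) +
      (∑ e ∈ G.edgeFinset, f (sSet V (i-1) ∪ edgeImg e ∪ tSet V (i+1))) +
      (∑ e ∈ G.edgeFinset, f (sSet V (i+1) ∪ edgeImg e ∪ tSet V (i-1))) := by
  have memC : ∀ e : Sym2 V, ∀ x, x = sSet V (i-1) ∪ edgeImg e ∪ tSet V (i+1) →
      tV 1 ∈ x ∧ (∃ v : V, Sum.inl v ∈ x) := by
    rintro e x rfl
    obtain ⟨v, hv⟩ := exists_mem_pairFinset e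
    refine ⟨Finset.mem_union_right _ (mem_tSet.2 ⟨le_rfl, by omega⟩), v,
      Finset.mem_union_left _ (Finset.mem_union_right _ ?_)⟩
    exact Finset.mem_image.2 ⟨v, hv, rfl⟩
  have memD : ∀ e : Sym2 V, ∀ x, x = sSet V (i+1) ∪ edgeImg e ∪ tSet V (i-1) →
      sV (i+1) ∈ x ∧ (∃ v : V, Sum.inl v ∈ x) := by
    rintro e x rfl
    obtain ⟨v, hv⟩ := exists_mem_pairFinset e
    refine ⟨Finset.mem_union_left _ (Finset.mem_union_left _
      (mem_sSet.2 ⟨by omega, le_rfl⟩)), v,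
      Finset.mem_union_left _ (Finset.mem_union_right _ ?_)⟩
    exact Finset.mem_image.2 ⟨v, hv, rfl⟩
  have d1 : Disjoint ((sSet V α).powersetCard 2) ((tSet V α).powersetCard 2) := by
    rw [Finset.disjoint_left]
    intro x hx hx'
    obtain ⟨hxs, hxc⟩ := Finset.mem_powersetCard.1 hx
    obtain ⟨hxt, -⟩ := Finset.mem_powersetCard.1 hx'
    obtain ⟨y, hy⟩ := Finset.card_pos.1 (by omega : 0 < x.card)
    obtain ⟨k, -, rfl⟩ := Finset.mem_image.1 (hxs hy)
    exact not_mem_tSet_sV (hxt hy)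
  have d2 : Disjoint ((sSet V α).powersetCard 2 ∪ (tSet V α).powersetCard 2)
      (G.edgeFinset.image (fun e => sSet V (i-1) ∪ edgeImg e ∪ tSet V (i+1))) := by
    rw [Finset.disjoint_right]
    intro x hx hx'
    obtain ⟨e, -, he⟩ := Finset.mem_image.1 hx
    obtain ⟨ht1, v, hv⟩ := memC e x he.symm
    rcases Finset.mem_union.1 hx' with h | h
    · exact not_mem_sSet_tV ((Finset.mem_powersetCard.1 h).1 ht1)
    · exact not_mem_tSet_inl ((Finset.mem_powersetCard.1 h).1 hv)
  have d3 : Disjoint ((sSet V α).powersetCard 2 ∪ (tSet V α).powersetCard 2 ∪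
      G.edgeFinset.image (fun e => sSet V (i-1) ∪ edgeImg e ∪ tSet V (i+1)))
      (G.edgeFinset.image (fun e => sSet V (i+1) ∪ edgeImg e ∪ tSet V (i-1))) := by
    rw [Finset.disjoint_right]
    intro x hx hx'
    obtain ⟨e, -, he⟩ := Finset.mem_image.1 hx
    obtain ⟨hs, v, hv⟩ := memD e x he.symm
    rcases Finset.mem_union.1 hx' with h | h
    · rcases Finset.mem_union.1 h with h' | h'
      · exact not_mem_sSet_inl ((Finset.mem_powersetCard.1 h').1 hv)
      · exact not_mem_tSet_sV ((Finset.mem_powersetCard.1 h').1 hs)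
    · obtain ⟨e', -, he'⟩ := Finset.mem_image.1 h
      rw [← he'] at hs
      rcases Finset.mem_union.1 hs with h' | h'
      · rcases Finset.mem_union.1 h' with h'' | h''
        · have := mem_sSet.1 h''; omega
        · exact not_mem_edgeImg_sV h''
      · exact not_mem_tSet_sV h'
  have injC : Set.InjOn (fun e => sSet V (i-1) ∪ edgeImg e ∪ tSet V (i+1))
      (G.edgeFinset : Set (Sym2 V)) := by
    intro e he e' he' h
    apply edgeImg_injective
    have := congrArg (fun s => s.filter (fun x => x.isLeft)) h
    simpa only [filter_left_eq] using this
  have injD : Set.InjOn (fun e => sSet V (i+1) ∪ edgeImg e ∪ tSet V (i-1))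
      (G.edgeFinset : Set (Sym2 V)) := by
    intro e he e' he' h
    apply edgeImg_injective
    have := congrArg (fun s => s.filter (fun x => x.isLeft)) h
    simpa only [filter_left_eq] using this
  rw [H4, Finset.sum_union d3, Finset.sum_union d2, Finset.sum_union d1,
    Finset.sum_image injC, Finset.sum_image injD]

end decomp



theorem stmt5 {V : Type*} [Fintype V] [DecidableEq V]
    (G : SimpleGraph V) [DecidableRel G.Adj]
    (m : ℕ) (hm : m = G.edgeFinset.card) (hm1 : 1 ≤ m)
    (i : ℕ) (hi : 2 ≤ i)
    (w : ℕ → ℝ) (hw0 : w 0 = 0) (hw1 : w 1 = 1) (hw : ∀ n, 0 ≤ w n)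
    (hwi : 2 * w i < w (i - 1) + w (i + 1))
    (α : ℕ) (hα1 : (m : ℝ) * (w (i - 1) + w (i + 1)) + 1 ≤ (α : ℝ)) (hα2 : i + 2 ≤ α) :
    IsLeast {x : ℝ | ∃ S : Finset (Vtx V), sV 1 ∈ S ∧ tV 1 ∉ S ∧
        x = ∑ e ∈ H4 G α i, w (splitVal S e)}
      ((m : ℝ) * (w (i - 1) + w (i + 1)) -
        (w (i - 1) + w (i + 1) - 2 * w i) * (maxCut G : ℝ)) := by
  classical
  set gap : ℝ := w (i-1) + w (i+1) - 2 * w i with hgap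
  have hgap0 : 0 < gap := by rw [hgap]; linarith
  have hdecomp := fun (S : Finset (Vtx V)) => H4_sum G (α := α) (i := i)
    (fun x => w (splitVal S x))
  -- the cut value of a subset U of V
  set cutv : Finset V → ℕ := fun U =>
    (G.edgeFinset.filter (fun e => (pairFinset e ∩ U).card = 1)).card with hcutv
  have key : ∀ S : Finset (Vtx V), sSet V α ⊆ S → (∀ x ∈ tSet V α, x ∉ S) →
      ((∑ e ∈ G.edgeFinset, w (splitVal S (sSet V (i-1) ∪ edgeImg e ∪ tSet V (i+1)))) +
       ∑ e ∈ G.edgeFinset, w (splitVal S (sSet V (i+1) ∪ edgeImg e ∪ tSet V (i-1))))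
      = (m : ℝ) * (w (i-1) + w (i+1)) -
        gap * (cutv (Finset.univ.filter fun v => (Sum.inl v : Vtx V) ∈ S) : ℝ) := by
    intro S hS hT
    set U := Finset.univ.filter fun v => (Sum.inl v : Vtx V) ∈ S with hU
    rw [← Finset.sum_add_distrib]
    have hterm : ∀ e ∈ G.edgeFinset,
        w (splitVal S (sSet V (i-1) ∪ edgeImg e ∪ tSet V (i+1))) +
        w (splitVal S (sSet V (i+1) ∪ edgeImg e ∪ tSet V (i-1)))
        = (w (i-1) + w (i+1)) -
          gap * (if (pairFinset e ∩ U).card = 1 then (1:ℝ) else 0) := by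
      intro e he
      have hdiag : ¬ e.IsDiag :=
        G.not_isDiag_of_mem_edgeSet (SimpleGraph.mem_edgeFinset.1 he)
      rw [splitA hi (by omega) hS hT hdiag, splitB hi (by omega) hS hT hdiag]
      have hcc : (edgeImg e ∩ S).card = (pairFinset e ∩ U).card := by
        have himg : edgeImg e ∩ S = (pairFinset e ∩ U).image Sum.inl := by
          ext x
          simp only [edgeImg, Finset.mem_inter, Finset.mem_image, hU, Finset.mem_filter,
            Finset.mem_univ, true_and]
          constructor
          · rintro ⟨⟨v, hv, rfl⟩, hxS⟩; exact ⟨v, ⟨hv, hxS⟩, rfl⟩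
          · rintro ⟨v, ⟨hv, hvS⟩, rfl⟩; exact ⟨⟨v, hv, rfl⟩, hvS⟩
        rw [himg, Finset.card_image_of_injective _ Sum.inl_injective]
      have hle : (pairFinset e ∩ U).card ≤ 2 := by
        calc (pairFinset e ∩ U).card ≤ (pairFinset e).card :=
              Finset.card_le_card Finset.inter_subset_left
          _ = 2 := card_pairFinset hdiag
      rw [hcc]
      have h012 : (pairFinset e ∩ U).card = 0 ∨ (pairFinset e ∩ U).card = 1 ∨
          (pairFinset e ∩ U).card = 2 := by omega
      rcases h012 with h | h | h <;> rw [h]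
      · simp only [Nat.add_zero, Nat.sub_zero, if_neg (by omega : ¬ (0:ℕ) = 1)]
        ring
      · have e1 : i - 1 + 1 = i := by omega
        have e2 : i + 1 - 1 = i := by omega
        rw [e1, e2, if_pos rfl, hgap]; ring
      · have e1 : i - 1 + 2 = i + 1 := by omega
        have e2 : i + 1 - 2 = i - 1 := by omega
        rw [e1, e2, if_neg (by omega : ¬ (2:ℕ) = 1)]; ring
    rw [Finset.sum_congr rfl hterm, Finset.sum_sub_distrib, Finset.sum_const,
      ← Finset.mul_sum, Finset.sum_boole, ← hm, nsmul_eq_mul]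
  have h1α : 1 ≤ α := by omega
  constructor
  · -- membership
    obtain ⟨U0, -, hU0⟩ := Finset.exists_mem_eq_sup (Finset.univ : Finset (Finset V))
      ⟨∅, Finset.mem_univ ∅⟩
      (fun U : Finset V =>
        (G.edgeFinset.filter (fun e => (pairFinset e ∩ U).card = 1)).card)
    set S0 : Finset (Vtx V) := sSet V α ∪ U0.image Sum.inl with hS0
    have hS : sSet V α ⊆ S0 := Finset.subset_union_left
    have hT : ∀ x ∈ tSet V α, x ∉ S0 := by
      intro x hx hx'
      obtain ⟨k, -, rfl⟩ := Finset.mem_image.1 hx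
      rcases Finset.mem_union.1 hx' with h | h
      · exact not_mem_sSet_tV h
      · obtain ⟨v, -, hv⟩ := Finset.mem_image.1 h
        simp [tV] at hv
    refine ⟨S0, Finset.mem_union_left _ (mem_sSet.2 ⟨le_rfl, h1α⟩), hT _ (mem_tSet.2 ⟨le_rfl, h1α⟩), ?_⟩
    rw [hdecomp S0]
    have hcs : (∑ p ∈ (sSet V α).powersetCard 2, w (splitVal S0 p)) = 0 := by
      apply Finset.sum_eq_zero
      intro p hp
      have hsub : p ⊆ S0 := (Finset.mem_powersetCard.1 hp).1.trans hS
      have : p \ S0 = ∅ := Finset.sdiff_eq_empty_iff_subset.2 hsub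
      rw [splitVal, this, Finset.card_empty, Nat.min_zero, hw0]
    have hct : (∑ p ∈ (tSet V α).powersetCard 2, w (splitVal S0 p)) = 0 := by
      apply Finset.sum_eq_zero
      intro p hp
      have hsub : p ⊆ tSet V α := (Finset.mem_powersetCard.1 hp).1
      have : p ∩ S0 = ∅ := by
        rw [Finset.eq_empty_iff_forall_notMem]
        intro x hx
        exact hT x (hsub (Finset.mem_of_mem_inter_left hx))
          (Finset.mem_of_mem_inter_right hx)
      rw [splitVal, this, Finset.card_empty, Nat.zero_min, hw0]
    have hUeq : (Finset.univ.filter fun v => (Sum.inl v : Vtx V) ∈ S0) = U0 := by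
      ext v
      simp only [Finset.mem_filter, Finset.mem_univ, true_and, hS0, Finset.mem_union]
      constructor
      · rintro (h | h)
        · exact absurd h not_mem_sSet_inl
        · obtain ⟨u, hu, huv⟩ := Finset.mem_image.1 h
          rwa [(Sum.inl_injective huv) ] at hu
      · intro hv; exact Or.inr (Finset.mem_image.2 ⟨v, hv, rfl⟩)
    have := key S0 hS hT
    rw [hUeq] at this
    rw [hcs, hct]
    have hmc : (maxCut G : ℕ) = cutv U0 := hU0
    rw [show (0:ℝ) + 0 + (∑ e ∈ G.edgeFinset, w (splitVal S0 (sSet V (i-1) ∪ edgeImg e ∪ tSet V (i+1)))) + (∑ e ∈ G.edgeFinset, w (splitVal S0 (sSet V (i+1) ∪ edgeImg e ∪ tSet V (i-1)))) = (∑ e ∈ G.edgeFinset, w (splitVal S0 (sSet V (i-1) ∪ edgeImg e ∪ tSet V (i+1)))) + (∑ e ∈ G.edgeFinset, w (splitVal S0 (sSet V (i+1) ∪ edgeImg e ∪ tSet V (i-1)))) by ring, this, hmc, hgap]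
  · -- lower bound
    rintro x ⟨S, hs1, ht1, rfl⟩
    rw [hdecomp S]
    have hEC : 0 ≤ ∑ e ∈ G.edgeFinset,
        w (splitVal S (sSet V (i-1) ∪ edgeImg e ∪ tSet V (i+1))) :=
      Finset.sum_nonneg fun e _ => hw _
    have hED : 0 ≤ ∑ e ∈ G.edgeFinset,
        w (splitVal S (sSet V (i+1) ∪ edgeImg e ∪ tSet V (i-1))) :=
      Finset.sum_nonneg fun e _ => hw _
    have hCS : 0 ≤ ∑ p ∈ (sSet V α).powersetCard 2, w (splitVal S p) :=
      Finset.sum_nonneg fun p _ => hw _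
    have hCT : 0 ≤ ∑ p ∈ (tSet V α).powersetCard 2, w (splitVal S p) :=
      Finset.sum_nonneg fun p _ => hw _
    have hmc0 : (0:ℝ) ≤ gap * (maxCut G : ℝ) :=
      mul_nonneg hgap0.le (Nat.cast_nonneg _)
    by_cases hS : sSet V α ⊆ S
    · by_cases hT : ∀ y ∈ tSet V α, y ∉ S
      · -- main case
        have hk := key S hS hT
        set U := Finset.univ.filter fun v => (Sum.inl v : Vtx V) ∈ S with hU
        have hle : cutv U ≤ maxCut G := Finset.le_sup (Finset.mem_univ U)
        have hle' : gap * (maxCut G : ℝ) ≥ gap * (cutv U : ℝ) := by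
          apply mul_le_mul_of_nonneg_left _ hgap0.le
          exact_mod_cast hle
        linarith [hk]
      · -- t-side crossing
        push_neg at hT
        obtain ⟨y, hy, hyS⟩ := hT
        have h1 : 0 < (tSet V α ∩ S).card :=
          Finset.card_pos.2 ⟨y, Finset.mem_inter.2 ⟨hy, hyS⟩⟩
        have h2 : 0 < (tSet V α \ S).card :=
          Finset.card_pos.2 ⟨tV 1, Finset.mem_sdiff.2 ⟨mem_tSet.2 ⟨le_rfl, h1α⟩, ht1⟩⟩
        have h3 : (tSet V α \ S).card + (tSet V α ∩ S).card = α := by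
          rw [Finset.card_sdiff_add_card_inter, card_tSet]
        have h4 : α ≤ (tSet V α ∩ S).card * (tSet V α \ S).card + 1 := by nlinarith
        have h5 : (α:ℝ) - 1 ≤ ((tSet V α ∩ S).card : ℝ) * ((tSet V α \ S).card : ℝ) := by
          have : (α:ℝ) ≤ ((tSet V α ∩ S).card * (tSet V α \ S).card + 1 : ℕ) := by
            exact_mod_cast h4
          push_cast at this
          linarith
        have h6 := clique_lb w hw0 hw1 hw S (tSet V α)
        push_cast at h6
        linarith
    · -- s-side crossing
      obtain ⟨y, hy, hyS⟩ := Finset.not_subset.1 hS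
      have h1 : 0 < (sSet V α ∩ S).card :=
        Finset.card_pos.2 ⟨sV 1, Finset.mem_inter.2 ⟨mem_sSet.2 ⟨le_rfl, h1α⟩, hs1⟩⟩
      have h2 : 0 < (sSet V α \ S).card :=
        Finset.card_pos.2 ⟨y, Finset.mem_sdiff.2 ⟨hy, hyS⟩⟩
      have h3 : (sSet V α \ S).card + (sSet V α ∩ S).card = α := by
        rw [Finset.card_sdiff_add_card_inter, card_sSet]
      have h4 : α ≤ (sSet V α ∩ S).card * (sSet V α \ S).card + 1 := by nlinarith
      have h5 : (α:ℝ) - 1 ≤ ((sSet V α ∩ S).card : ℝ) * ((sSet V α \ S).card : ℝ) := by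
        have : (α:ℝ) ≤ ((sSet V α ∩ S).card * (sSet V α \ S).card + 1 : ℕ) := by
          exact_mod_cast h4
        push_cast at this
        linarith
      have h6 := clique_lb w hw0 hw1 hw S (sSet V α)
      push_cast at h6
      linarith
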